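/- Let R be a DVR with uniformizer π, maximal ideal 𝔭, residue field k, quotient field K; let L = K(α) be finite separable with α integral over R, minimal polynomial P, A = R[α], O_L the integral closure of R in L. Suppose f ∈ R[X] is monic with f̄ dividing P̄, P = fg + πT with T̄ ≠ 0 in k[X], and let D̄ = gcd(f̄, ḡ, T̄). Then ν_𝔭(Ind_R(P)) ≥ deg D, where Ind_R(P) = [O_L : A]_R. -/

import Mathlib

open Polynomial

/-- Polynomials over a field form a normalized GCD monoid in which `gcd` and `lcm` of nonzero
polynomials are monic. -/
noncomputable instance polyNormalizedGCDMonoid (K : Type*) [Field K] :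
    NormalizedGCDMonoid (Polynomial K) :=
  letI := Classical.decEq K
  UniqueFactorizationMonoid.toNormalizedGCDMonoid _

/-- The length of an `R`-module `M` (the Krull dimension of its submodule lattice).  Over a DVR
with maximal ideal `𝔭`, `Ind_R(P) = [O_L : R[α]]_R = 𝔭 ^ length (O_L ⧸ R[α])`, so
`ν_𝔭(Ind_R(P)) = length (O_L ⧸ R[α])`. -/
noncomputable def moduleLength (R M : Type*) [Semiring R] [AddCommGroup M] [Module R M] : ℕ∞ :=
  WithBot.unbotD 0 (Order.krullDim (Submodule R M))

/-- Let `R` be a DVR with uniformizer `π` and maximal ideal `𝔭`, `L = K(α)`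
finite separable over the quotient field `K` of `R` with `α` integral over `R`, minimal
polynomial `P`, `A = R[α]`, `O_L` the integral closure of `R` in `L`.  Suppose `f ∈ R[X]` is
monic with `f̄ ∣ P̄`, `P = fg + πT` with `T̄ ≠ 0`, and `D̄ = (f̄, ḡ, T̄)`.  Then
`ν_𝔭(Ind_R(P)) ≥ deg D`, i.e. `length (O_L ⧸ A) ≥ deg D`. -/
theorem stmt7 (R : Type*) [CommRing R] [IsDomain R] [IsDiscreteValuationRing R]
    (π : R) (hπ : Irreducible π)
    (K L : Type*) [Field K] [Field L] [Algebra R K] [IsFractionRing R K]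
    [Algebra K L] [Algebra R L] [IsScalarTower R K L]
    [FiniteDimensional K L] [Algebra.IsSeparable K L]
    (α : L) (hα : IsIntegral R α) (hgen : Algebra.adjoin K {α} = ⊤)
    (P : R[X]) (hP : P = minpoly R α)
    (A : Subalgebra R L) (hA : A = Algebra.adjoin R {α})
    (f g T D : R[X]) (hf : f.Monic)
    (hfP : f.map (IsLocalRing.residue R) ∣ P.map (IsLocalRing.residue R))
    (hPfg : P = f * g + C π * T)
    (hT : T.map (IsLocalRing.residue R) ≠ 0)
    (hD : D.Monic)
    (hDgcd : D.map (IsLocalRing.residue R) =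
      gcd (f.map (IsLocalRing.residue R))
        (gcd (g.map (IsLocalRing.residue R)) (T.map (IsLocalRing.residue R)))) :
    (D.natDegree : ℕ∞) ≤
      moduleLength R (↥(Subalgebra.toSubmodule (integralClosure R L)) ⧸
        Submodule.comap (Subalgebra.toSubmodule (integralClosure R L)).subtype
          (Subalgebra.toSubmodule A)) := by
  classical
  set res := IsLocalRing.residue R with hres_def
  set d := D.natDegree with hd_def
  -- lifting divisibilities
  have hdiv : ∀ p : R[X], (D.map res ∣ p.map res) → ∃ F a : R[X], p = D * F + C π * a := by
    intro p hp
    obtain ⟨Fb, hFb⟩ := hp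
    obtain ⟨F, rfl⟩ := Polynomial.map_surjective res Ideal.Quotient.mk_surjective Fb
    have h0 : (p - D * F).map res = 0 := by
      rw [Polynomial.map_sub, Polynomial.map_mul, hFb, sub_self]
    have hdvd : C π ∣ p - D * F := by
      rw [Polynomial.C_dvd_iff_dvd_coeff]
      intro i
      have : res ((p - D * F).coeff i) = 0 := by
        rw [← Polynomial.coeff_map, h0, Polynomial.coeff_zero]
      have hmem : (p - D * F).coeff i ∈ IsLocalRing.maximalIdeal R :=
        Ideal.Quotient.eq_zero_iff_mem.mp this
      rwa [hπ.maximalIdeal_eq, Ideal.mem_span_singleton] at hmem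
    obtain ⟨a, ha⟩ := hdvd
    exact ⟨F, a, by linear_combination ha⟩
  have hDf : D.map res ∣ f.map res := hDgcd ▸ @gcd_dvd_left _ _ (polyNormalizedGCDMonoid (IsLocalRing.ResidueField R)).toGCDMonoid _ _
  have hDg : D.map res ∣ g.map res :=
    hDgcd ▸ (@gcd_dvd_right _ _ (polyNormalizedGCDMonoid (IsLocalRing.ResidueField R)).toGCDMonoid _ _).trans (@gcd_dvd_left _ _ (polyNormalizedGCDMonoid (IsLocalRing.ResidueField R)).toGCDMonoid _ _)
  have hDT : D.map res ∣ T.map res :=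
    hDgcd ▸ (@gcd_dvd_right _ _ (polyNormalizedGCDMonoid (IsLocalRing.ResidueField R)).toGCDMonoid _ _).trans (@gcd_dvd_right _ _ (polyNormalizedGCDMonoid (IsLocalRing.ResidueField R)).toGCDMonoid _ _)
  obtain ⟨F, a, hfe⟩ := hdiv f hDf
  obtain ⟨G, b, hge⟩ := hdiv g hDg
  obtain ⟨S, c, hTe⟩ := hdiv T hDT
  -- basic facts
  have hPm : P.Monic := hP ▸ minpoly.monic hα
  have hPa : aeval α P = 0 := hP ▸ minpoly.aeval R α
  have hresπ : res π = 0 :=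
    Ideal.Quotient.eq_zero_iff_mem.mpr ((IsLocalRing.mem_maximalIdeal π).mpr
      (mem_nonunits_iff.mpr hπ.not_isUnit))
  have hinjRL : Function.Injective (algebraMap R L) := by
    rw [IsScalarTower.algebraMap_eq R K L]
    exact (algebraMap K L).injective.comp (IsFractionRing.injective R K)
  set π' : L := algebraMap R L π with hπ'_def
  have hπ'0 : π' ≠ 0 := fun h => hπ.ne_zero (hinjRL (by rw [map_zero]; exact h))
  -- the element β
  set u : L := aeval α (f * G) with hu_def
  set β : L := π'⁻¹ * u with hβ_def
  have hπβ : π' * β = u := by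
    rw [hβ_def, ← mul_assoc, mul_inv_cancel₀ hπ'0, one_mul]
  -- key polynomial identity
  have hkey : (f * G) ^ 2 =
      C π * ((a * G - F * b - S) * (f * G)) - C π ^ 2 * (c * F * G - S * a * G) + F * G * P := by
    rw [hPfg, hfe, hge, hTe]; ring
  have hA_aeval : ∀ p : R[X], aeval α p ∈ A := by
    intro p
    rw [hA, Algebra.adjoin_singleton_eq_range_aeval]
    exact ⟨p, rfl⟩
  -- quadratic equation for β
  have haevalC : ∀ (p q : R[X]), aeval α (C π * p + q) = π' * aeval α p + aeval α q := by
    intro p q; simp [hπ'_def]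
  have hu2 : u ^ 2 = π' * (aeval α (a * G - F * b - S) * u) -
      π' ^ 2 * aeval α (c * F * G - S * a * G) := by
    have h := congrArg (aeval α) hkey
    simp only [map_add, map_sub, map_mul, map_pow, aeval_C, hPa, mul_zero, add_zero] at h
    rw [hu_def]
    simp only [map_sub, map_mul, map_add, map_pow, aeval_C]
    linear_combination h
  have hβquad : β ^ 2 = aeval α (a * G - F * b - S) * β - aeval α (c * F * G - S * a * G) := by
    have h2 : (π' * β) ^ 2 = π' * (aeval α (a * G - F * b - S) * (π' * β)) -
        π' ^ 2 * aeval α (c * F * G - S * a * G) := by rw [hπβ]; exact hu2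
    have h3 : π' ^ 2 * (β ^ 2) =
        π' ^ 2 * (aeval α (a * G - F * b - S) * β - aeval α (c * F * G - S * a * G)) := by
      ring_nf
      ring_nf at h2
      linear_combination h2
    exact mul_left_cancel₀ (pow_ne_zero 2 hπ'0) h3
  -- β is integral over R
  have hadj_aeval : ∀ p : R[X], aeval α p ∈ Algebra.adjoin R {α} := by
    intro p
    rw [Algebra.adjoin_singleton_eq_range_aeval]
    exact ⟨p, rfl⟩
  have hβint : IsIntegral R β := by
    set B := Algebra.adjoin R {α} with hB_def
    have hfin : Module.Finite R B := ⟨(Submodule.fg_top _).mpr hα.fg_adjoin_singleton⟩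
    have hint : Algebra.IsIntegral R B := Algebra.IsIntegral.of_finite R B
    set e1 : B := ⟨aeval α (a * G - F * b - S), hadj_aeval _⟩ with he1_def
    set e0 : B := ⟨aeval α (c * F * G - S * a * G), hadj_aeval _⟩ with he0_def
    have hc1 : (algebraMap B L) e1 = aeval α (a * G - F * b - S) := rfl
    have hc0 : (algebraMap B L) e0 = aeval α (c * F * G - S * a * G) := rfl
    refine isIntegral_trans (A := B) β ?_
    refine ⟨X ^ 2 - (C e1 * X - C e0), ?_, ?_⟩
    · refine monic_X_pow_sub ?_
      refine lt_of_le_of_lt (degree_sub_le _ _) ?_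
      rw [max_lt_iff]
      constructor
      · exact lt_of_le_of_lt (by simpa using degree_C_mul_X_pow_le 1 e1) (by norm_num)
      · exact lt_of_le_of_lt degree_C_le (by norm_num)
    · have h5 : (aeval β) (X ^ 2 - (C e1 * X - C e0)) = 0 := by
        simp only [map_sub, map_mul, map_pow, aeval_X, aeval_C]
        rw [hc1, hc0, hβquad]
        ring
      simpa [aeval_def] using h5
  -- the independence lemma
  have hPbar : P.map res = f.map res * (D.map res * G.map res) := by
    have h1 : P.map res = f.map res * g.map res := by
      rw [hPfg, Polynomial.map_add, Polynomial.map_mul, Polynomial.map_mul, map_C, hresπ,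
        C_0, zero_mul, add_zero]
    have h2 : g.map res = D.map res * G.map res := by
      rw [hge, Polynomial.map_add, Polynomial.map_mul, Polynomial.map_mul, map_C, hresπ,
        C_0, zero_mul, add_zero]
    rw [h1, h2]
  have hPbar_ne : P.map res ≠ 0 := (hPm.map res).ne_zero
  have hfG_ne : f.map res * G.map res ≠ 0 := by
    intro h
    rcases mul_eq_zero.mp h with h | h
    · exact hPbar_ne (by rw [hPbar, h, zero_mul])
    · exact hPbar_ne (by rw [hPbar, h, mul_zero, mul_zero])
  have hindep : ∀ w : R[X], w.Monic → w.natDegree < d → aeval α w * β ∉ A := by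
    intro w hw hwd hmem
    rw [hA, Algebra.adjoin_singleton_eq_range_aeval] at hmem
    obtain ⟨z, hz⟩ := hmem
    have hz2 : aeval α z = aeval α w * β := hz
    have hz' : aeval α w * u = π' * aeval α z := by
      rw [hz2, ← hπβ]; ring
    have h0 : aeval α (w * (f * G) - C π * z) = 0 := by
      have h6 : aeval α (w * (f * G) - C π * z) = aeval α w * u - π' * aeval α z := by
        simp only [map_sub, map_mul, aeval_C, hu_def, hπ'_def]
        try ring
      rw [h6, hz', sub_self]
    haveI : Module.IsTorsionFree R L :=
      (Module.isTorsionFree_iff_algebraMap_injective (R := R) (A := L)).mpr hinjRL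
    have hdvd : P ∣ w * (f * G) - C π * z := by
      rw [hP]; exact minpoly.isIntegrallyClosed_dvd hα h0
    have hdvd2 : P.map res ∣ (w.map res) * (f.map res * G.map res) := by
      obtain ⟨q, hq⟩ := hdvd
      refine ⟨q.map res, ?_⟩
      have := congrArg (Polynomial.map res) hq
      rw [Polynomial.map_sub, Polynomial.map_mul, Polynomial.map_mul, Polynomial.map_mul,
        map_C, hresπ, C_0, zero_mul, sub_zero, Polynomial.map_mul] at this
      exact this
    rw [hPbar] at hdvd2
    have hdvd3 : (f.map res * G.map res) * D.map res ∣ (f.map res * G.map res) * w.map res := by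
      have e1 : f.map res * (D.map res * G.map res) = (f.map res * G.map res) * D.map res := by
        ring
      have e2 : w.map res * (f.map res * G.map res) = (f.map res * G.map res) * w.map res := by
        ring
      rw [e1, e2] at hdvd2
      exact hdvd2
    have hDw : D.map res ∣ w.map res := (mul_dvd_mul_iff_left hfG_ne).mp hdvd3
    have h1 : d ≤ (w.map res).natDegree := by
      have := Polynomial.natDegree_le_of_dvd hDw (hw.map res).ne_zero
      rwa [hD.natDegree_map] at this
    rw [hw.natDegree_map] at h1
    exact absurd h1 (not_le.mpr hwd)
  -- membership in the integral closure
  have hαO : α ∈ integralClosure R L := hα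
  have hβO : β ∈ integralClosure R L := hβint
  set O := Subalgebra.toSubmodule (integralClosure R L) with hO_def
  set N := Submodule.comap O.subtype (Subalgebra.toSubmodule A) with hN_def
  have hxmem : ∀ j : ℕ, α ^ j * β ∈ O := by
    intro j
    rw [hO_def, Subalgebra.mem_toSubmodule]
    exact mul_mem (pow_mem hαO j) hβO
  set x : ℕ → O := fun j => ⟨α ^ j * β, hxmem j⟩ with hx_def
  set q : ℕ → (↥O ⧸ N) := fun j => N.mkQ (x j) with hq_def
  -- key: q i not in the span of earlier ones
  have hnotmem : ∀ i, i < d → q i ∉ Submodule.span R (Set.range fun j : Fin i => q j) := by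
    intro i hi hmem
    rw [Submodule.mem_span_range_iff_exists_fun] at hmem
    obtain ⟨cf, hcf⟩ := hmem
    have hker : (∑ j : Fin i, cf j • x (j : ℕ)) - x i ∈ N := by
      have hmk : N.mkQ ((∑ j : Fin i, cf j • x (j : ℕ)) - x i) = 0 := by
        rw [map_sub, map_sum]
        simp only [map_smul]
        rw [hcf]
        simp [hq_def]
      rwa [← Submodule.Quotient.mk_eq_zero]
    have hval : ((((∑ j : Fin i, cf j • x (j : ℕ)) - x i : ↥O)) : L) ∈ Subalgebra.toSubmodule A :=
      Submodule.mem_comap.mp hker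
    set w : R[X] := X ^ i - ∑ j : Fin i, C (cf j) * X ^ (j : ℕ) with hw_def
    have hsum_deg : (∑ j : Fin i, C (cf j) * X ^ (j : ℕ)).degree < (i : WithBot ℕ) := by
      refine lt_of_le_of_lt (degree_sum_le _ _) ?_
      rw [Finset.sup_lt_iff (by exact WithBot.bot_lt_coe i)]
      intro j _
      exact lt_of_le_of_lt (degree_C_mul_X_pow_le _ _)
        (by exact_mod_cast WithBot.coe_lt_coe.mpr j.isLt)
    have hwm : w.Monic := monic_X_pow_sub hsum_deg
    have hwd : w.natDegree = i := by
      have : w.degree = (i : WithBot ℕ) := by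
        rw [hw_def]
        rw [degree_sub_eq_left_of_degree_lt (by rwa [degree_X_pow])]
        exact degree_X_pow i
      exact natDegree_eq_of_degree_eq_some this
    have hwβ : aeval α w * β ∈ A := by
      have hcoe : ((∑ j : Fin i, cf j • x (j : ℕ)) - x i : L)
          = (∑ j : Fin i, cf j • (α ^ (j : ℕ) * β)) - α ^ i * β := by
        push_cast [hx_def]
        rfl
      have hcalc : aeval α w * β = -(((∑ j : Fin i, cf j • x (j : ℕ)) - x i : L)) := by
        have hsum : (∑ j : Fin i, (algebraMap R L (cf j) * α ^ (j : ℕ)) * β)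
            = ∑ j : Fin i, algebraMap R L (cf j) * (α ^ (j : ℕ) * β) :=
          Finset.sum_congr rfl fun j _ => by ring
        rw [hcoe, hw_def]
        simp only [map_sub, map_pow, map_sum, map_mul, aeval_X, aeval_C, Algebra.smul_def]
        rw [sub_mul, Finset.sum_mul, hsum, neg_sub]
      rw [hcalc]
      exact neg_mem hval
    exact hindep w hwm (hwd ▸ hi) hwβ
  -- build the chain
  let chain : LTSeries (Submodule R (↥O ⧸ N)) :=
    { length := d
      toFun := fun i => Submodule.span R (Set.range fun j : Fin (i : ℕ) => q j)
      step := by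
        intro i
        change (_ : Submodule R (↥O ⧸ N)) < _
        rw [SetLike.lt_iff_le_and_exists]
        constructor
        · apply Submodule.span_mono
          rintro _ ⟨j, rfl⟩
          exact ⟨⟨(j : ℕ), lt_of_lt_of_le j.isLt (by simp [Fin.le_def])⟩, rfl⟩
        · refine ⟨q (i : ℕ), Submodule.subset_span ⟨⟨(i : ℕ), by simp⟩, rfl⟩, ?_⟩
          exact hnotmem (i : ℕ) i.isLt }
  have hlen := Order.LTSeries.length_le_krullDim chain
  have hlen' : (d : WithBot ℕ∞) ≤ Order.krullDim (Submodule R (↥O ⧸ N)) := hlen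
  show (d : ℕ∞) ≤ WithBot.unbotD 0 (Order.krullDim (Submodule R (↥O ⧸ N)))
  rcases hk : Order.krullDim (Submodule R (↥O ⧸ N)) with _ | m
  · rw [hk] at hlen'
    exact absurd (le_bot_iff.mp hlen') (by simp)
  · rw [hk] at hlen'
    rw [show (WithBot.unbotD 0 (some m) : ℕ∞) = m from rfl]
    have hcast : (d : WithBot ℕ∞) = ((d : ℕ∞) : WithBot ℕ∞) := by
      rfl
    rw [hcast] at hlen'
    exact WithBot.coe_le_coe.mp hlen'
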